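/- Fix integers 0 ≤ s ≤ n and let S be a uniformly random s-element subset of [n] (i.e., S is distributed uniformly over all subsets of [n] of cardinality s). Define the indicator random variables X_i = 1{i ∈ S} for i ∈ [n]. Then X_1, …, X_n are negatively associated. -/

import Mathlib

open MeasureTheory

section NAAux

open Finset

variable {α : Type*} [DecidableEq α]

namespace NAUniformSubset

lemma mem_image_swap (k k₀ : α) (S : Finset α) (x : α) :
    x ∈ S.image (Equiv.swap k k₀) ↔ Equiv.swap k k₀ x ∈ S := by
  rw [mem_image]
  constructor
  · rintro ⟨y, hy, rfl⟩; rwa [Equiv.swap_apply_self]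
  · intro h; exact ⟨_, h, Equiv.swap_apply_self _ _ _⟩

lemma image_swap_image_swap (k k₀ : α) (S : Finset α) :
    (S.image (Equiv.swap k k₀)).image (Equiv.swap k k₀) = S := by
  ext x; rw [mem_image_swap, mem_image_swap, Equiv.swap_apply_self]

lemma image_swap_subset_erase {V : Finset α} {k k₀ : α} (hk : k ∈ V) {S : Finset α}
    (hS : S ⊆ V.erase k) : S.image (Equiv.swap k k₀) ⊆ V.erase k₀ := by
  intro x hx
  rw [mem_image_swap] at hx
  rcases eq_or_ne x k with rfl | hxk
  · rw [Equiv.swap_apply_left] at hx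
    have hne : k₀ ≠ x := (mem_erase.mp (hS hx)).1
    exact mem_erase.mpr ⟨hne.symm, hk⟩
  · rcases eq_or_ne x k₀ with rfl | hxk₀
    · rw [Equiv.swap_apply_right] at hx
      exact absurd rfl (mem_erase.mp (hS hx)).1
    · rw [Equiv.swap_apply_of_ne_of_ne hxk hxk₀] at hx
      exact mem_erase.mpr ⟨hxk₀, (mem_erase.mp (hS hx)).2⟩

lemma swap_reindex (V : Finset α) {k k₀ : α} (hk : k ∈ V) (hk₀ : k₀ ∈ V) (s : ℕ)
    (H : Finset α → ℝ) :
    ∑ S ∈ (V.erase k).powersetCard s, H S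
      = ∑ S ∈ (V.erase k₀).powersetCard s, H (S.image (Equiv.swap k k₀)) := by
  refine Finset.sum_nbij' (fun S => S.image (Equiv.swap k k₀))
    (fun S => S.image (Equiv.swap k k₀)) ?_ ?_ ?_ ?_ ?_
  · intro S hS
    rw [mem_powersetCard] at hS ⊢
    exact ⟨image_swap_subset_erase hk hS.1,
      by rw [card_image_of_injective _ (Equiv.injective _), hS.2]⟩
  · intro S hS
    rw [mem_powersetCard] at hS ⊢
    rw [Equiv.swap_comm]
    exact ⟨image_swap_subset_erase hk₀ hS.1,
      by rw [card_image_of_injective _ (Equiv.injective _), hS.2]⟩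
  · intro S _; exact image_swap_image_swap _ _ _
  · intro S _; exact image_swap_image_swap _ _ _
  · intro S _; rw [image_swap_image_swap]

lemma image_swap_of_not_mem {k k₀ : α} {S : Finset α} (hk : k ∉ S) (hk₀ : k₀ ∉ S) :
    S.image (Equiv.swap k k₀) = S := by
  ext x
  rw [mem_image_swap]
  rcases eq_or_ne x k with rfl | hxk
  · rw [Equiv.swap_apply_left]; exact iff_of_false hk₀ hk
  · rcases eq_or_ne x k₀ with rfl | hxk₀
    · rw [Equiv.swap_apply_right]; exact iff_of_false hk hk₀
    · rw [Equiv.swap_apply_of_ne_of_ne hxk hxk₀]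

lemma insert_image_swap_of_mem {k k₀ : α} {S : Finset α} (hk : k ∈ S) (hk₀ : k₀ ∉ S) :
    insert k (S.image (Equiv.swap k k₀)) = insert k₀ S := by
  ext x
  rw [mem_insert, mem_insert, mem_image_swap]
  rcases eq_or_ne x k with rfl | hxk
  · simp [Equiv.swap_apply_left, hk]
  · rcases eq_or_ne x k₀ with rfl | hxk₀
    · simp [Equiv.swap_apply_right, hk, hk₀]
    · rw [Equiv.swap_apply_of_ne_of_ne hxk hxk₀]
      simp [hxk, hxk₀]

lemma insert_inter_of_not_mem {k₀ : α} {S I : Finset α} (h : k₀ ∉ I) :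
    (insert k₀ S) ∩ I = S ∩ I := by
  ext x; simp only [mem_inter, mem_insert]
  constructor
  · rintro ⟨rfl | hxS, hxI⟩
    · exact absurd hxI h
    · exact ⟨hxS, hxI⟩
  · rintro ⟨hxS, hxI⟩; exact ⟨Or.inr hxS, hxI⟩

lemma count_id (V : Finset α) (s : ℕ) (H : Finset α → ℝ) :
    ∑ k ∈ V, ∑ S ∈ (V.erase k).powersetCard s, H (insert k S)
      = (s + 1 : ℝ) * ∑ S ∈ V.powersetCard (s + 1), H S := by
  have step : ∀ k ∈ V, ∑ S ∈ (V.erase k).powersetCard s, H (insert k S)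
      = ∑ S ∈ (V.powersetCard (s+1)).filter (fun S => k ∈ S), H S := by
    intro k hk
    refine Finset.sum_nbij' (fun S => insert k S) (fun S => S.erase k) ?_ ?_ ?_ ?_ ?_
    · intro S hS
      rw [mem_powersetCard] at hS
      have hkS : k ∉ S := fun h => (mem_erase.mp (hS.1 h)).1 rfl
      rw [mem_filter, mem_powersetCard]
      refine ⟨⟨?_, by rw [card_insert_of_notMem hkS, hS.2]⟩, mem_insert_self _ _⟩
      exact insert_subset hk (hS.1.trans (erase_subset _ _))
    · intro S hS
      rw [mem_filter, mem_powersetCard] at hS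
      rw [mem_powersetCard]
      exact ⟨erase_subset_erase _ hS.1.1,
        by rw [card_erase_of_mem hS.2, hS.1.2]; rfl⟩
    · intro S hS
      rw [mem_powersetCard] at hS
      exact erase_insert (fun h => (mem_erase.mp (hS.1 h)).1 rfl)
    · intro S hS
      rw [mem_filter] at hS
      exact insert_erase hS.2
    · intro S hS; rfl
  rw [Finset.sum_congr rfl step]
  simp only [Finset.sum_filter]
  rw [Finset.sum_comm]
  rw [Finset.mul_sum]
  refine Finset.sum_congr rfl fun S hS => ?_
  rw [mem_powersetCard] at hS
  rw [← Finset.sum_filter]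
  have : V.filter (fun k => k ∈ S) = S := by
    ext x; simp only [mem_filter]
    exact ⟨fun h => h.2, fun h => ⟨hS.1 h, h⟩⟩
  rw [this, Finset.sum_const, hS.2, nsmul_eq_mul]
  push_cast; ring

lemma swap_sum_le (V I : Finset α) (F : Finset α → ℝ) (hm : Monotone F)
    (hdep : ∀ S, F S = F (S ∩ I)) {k k₀ : α} (hk : k ∈ V) (hk₀ : k₀ ∈ V)
    (hk₀I : k₀ ∉ I) (s : ℕ) :
    ∑ S ∈ (V.erase k₀).powersetCard s, F (insert k₀ S)
      ≤ ∑ S ∈ (V.erase k).powersetCard s, F (insert k S) := by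
  rcases eq_or_ne k k₀ with rfl | hne
  · exact le_refl _
  rw [swap_reindex V hk hk₀ s (fun S => F (insert k S))]
  apply Finset.sum_le_sum
  intro S hS
  have hk₀S : k₀ ∉ S := fun h => (mem_erase.mp ((mem_powersetCard.mp hS).1 h)).1 rfl
  by_cases hkS : k ∈ S
  · rw [insert_image_swap_of_mem hkS hk₀S]
  · rw [image_swap_of_not_mem hkS hk₀S]
    calc F (insert k₀ S) = F (S ∩ I) := by rw [hdep, insert_inter_of_not_mem hk₀I]
      _ ≤ F (insert k S) := hm (inter_subset_left.trans (subset_insert _ _))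

lemma swap_sum_eq (V I : Finset α) (F : Finset α → ℝ)
    (hdep : ∀ S, F S = F (S ∩ I)) {k k₀ : α} (hk : k ∈ V) (hk₀ : k₀ ∈ V)
    (hkI : k ∉ I) (hk₀I : k₀ ∉ I) (s : ℕ) :
    ∑ S ∈ (V.erase k₀).powersetCard s, F (insert k₀ S)
      = ∑ S ∈ (V.erase k).powersetCard s, F (insert k S) := by
  rcases eq_or_ne k k₀ with rfl | hne
  · rfl
  rw [swap_reindex V hk hk₀ s (fun S => F (insert k S))]
  apply Finset.sum_congr rfl
  intro S hS
  have hk₀S : k₀ ∉ S := fun h => (mem_erase.mp ((mem_powersetCard.mp hS).1 h)).1 rfl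
  by_cases hkS : k ∈ S
  · rw [insert_image_swap_of_mem hkS hk₀S]
  · rw [image_swap_of_not_mem hkS hk₀S]
    calc F (insert k₀ S) = F (S ∩ I) := by rw [hdep, insert_inter_of_not_mem hk₀I]
      _ = F (insert k S) := by rw [hdep (insert k S), insert_inter_of_not_mem hkI]

lemma const_case (V I : Finset α) (s : ℕ) (F G : Finset α → ℝ)
    (hdF : ∀ S, F S = F (S ∩ I)) (hVI : V ∩ I = ∅) :
    ((V.card.choose s : ℕ) : ℝ) * ∑ S ∈ V.powersetCard s, F S * G S =
      (∑ S ∈ V.powersetCard s, F S) * ∑ S ∈ V.powersetCard s, G S := by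
  have hF : ∀ S ∈ V.powersetCard s, F S = F ∅ := by
    intro S hS
    rw [mem_powersetCard] at hS
    have h1 : S ∩ I = ∅ := by
      apply subset_empty.mp
      rw [← hVI]
      exact inter_subset_inter hS.1 Subset.rfl
    have h2 : (∅ : Finset α) ∩ I = ∅ := by simp
    rw [hdF S, h1, ← h2, ← hdF ∅]
  have h1 : ∑ S ∈ V.powersetCard s, F S * G S = F ∅ * ∑ S ∈ V.powersetCard s, G S := by
    rw [mul_sum]
    exact sum_congr rfl fun S hS => by rw [hF S hS]
  have h2 : ∑ S ∈ V.powersetCard s, F S = ((V.card.choose s : ℕ) : ℝ) * F ∅ := by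
    rw [sum_congr rfl hF, sum_const, card_powersetCard, nsmul_eq_mul]
  rw [h1, h2]; ring

omit [DecidableEq α] in
lemma cov_step (V : Finset α) (A B : α → ℝ) (a b : ℝ)
    (hAa : ∀ k ∈ V, a ≤ A k) (hBb : ∀ k ∈ V, b ≤ B k)
    (huv : ∀ k ∈ V, (A k - a) * (B k - b) = 0) :
    (V.card : ℝ) * ∑ k ∈ V, A k * B k ≤ (∑ k ∈ V, A k) * ∑ k ∈ V, B k := by
  have hSA : (0:ℝ) ≤ ∑ k ∈ V, (A k - a) :=
    sum_nonneg fun k hk => sub_nonneg.mpr (hAa k hk)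
  have hSB : (0:ℝ) ≤ ∑ k ∈ V, (B k - b) :=
    sum_nonneg fun k hk => sub_nonneg.mpr (hBb k hk)
  have eAB : ∑ k ∈ V, A k * B k
      = ∑ k ∈ V, (a * b + a * (B k - b) + b * (A k - a)) := by
    refine sum_congr rfl fun k hk => ?_
    have := huv k hk
    nlinarith [this]
  have eA : ∑ k ∈ V, A k = (V.card : ℝ) * a + ∑ k ∈ V, (A k - a) := by
    rw [sum_sub_distrib, sum_const, nsmul_eq_mul]; ring
  have eB : ∑ k ∈ V, B k = (V.card : ℝ) * b + ∑ k ∈ V, (B k - b) := by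
    rw [sum_sub_distrib, sum_const, nsmul_eq_mul]; ring
  rw [eAB, sum_add_distrib, sum_add_distrib, sum_const, nsmul_eq_mul,
    ← mul_sum, ← mul_sum, eA, eB]
  nlinarith [mul_nonneg hSA hSB]

lemma key_na (s : ℕ) : ∀ (V I J : Finset α), Disjoint I J →
    ∀ F G : Finset α → ℝ, Monotone F → Monotone G →
    (∀ S, F S = F (S ∩ I)) → (∀ S, G S = G (S ∩ J)) →
    ((V.card.choose s : ℕ) : ℝ) * ∑ S ∈ V.powersetCard s, F S * G S ≤
      (∑ S ∈ V.powersetCard s, F S) * ∑ S ∈ V.powersetCard s, G S := by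
  induction s with
  | zero =>
    intro V I J _ F G _ _ _ _
    simp [powersetCard_zero]
  | succ s ih =>
    intro V I J hIJ F G hmF hmG hdF hdG
    by_cases hVI : V ∩ I = ∅
    · exact le_of_eq (const_case V I (s+1) F G hdF hVI)
    by_cases hVJ : V ∩ J = ∅
    · refine le_of_eq ?_
      have := const_case V J (s+1) G F hdG hVJ
      calc ((V.card.choose (s+1) : ℕ) : ℝ) * ∑ S ∈ V.powersetCard (s+1), F S * G S
          = ((V.card.choose (s+1) : ℕ) : ℝ) * ∑ S ∈ V.powersetCard (s+1), G S * F S := by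
            rw [sum_congr rfl fun S _ => mul_comm (F S) (G S)]
        _ = (∑ S ∈ V.powersetCard (s+1), G S) * ∑ S ∈ V.powersetCard (s+1), F S := this
        _ = (∑ S ∈ V.powersetCard (s+1), F S) * ∑ S ∈ V.powersetCard (s+1), G S :=
            mul_comm _ _
    by_cases hN : V.card < s + 1
    · rw [powersetCard_eq_empty.mpr hN]
      simp
    push_neg at hN
    obtain ⟨l₀, hl₀⟩ := nonempty_iff_ne_empty.mpr hVI
    obtain ⟨k₀, hk₀⟩ := nonempty_iff_ne_empty.mpr hVJ
    rw [mem_inter] at hl₀ hk₀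
    have hk₀I : k₀ ∉ I := fun h => (Finset.disjoint_left.mp hIJ h) hk₀.2
    have hl₀J : l₀ ∉ J := fun h => (Finset.disjoint_left.mp hIJ hl₀.2) h
    let A : α → ℝ := fun k => ∑ S ∈ (V.erase k).powersetCard s, F (insert k S)
    let B : α → ℝ := fun k => ∑ S ∈ (V.erase k).powersetCard s, G (insert k S)
    let C : α → ℝ := fun k =>
      ∑ S ∈ (V.erase k).powersetCard s, F (insert k S) * G (insert k S)
    have hAa : ∀ k ∈ V, A k₀ ≤ A k :=
      fun k hk => swap_sum_le V I F hmF hdF hk hk₀.1 hk₀I s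
    have hAeq : ∀ k ∈ V, k ∉ I → A k = A k₀ :=
      fun k hk hkI => (swap_sum_eq V I F hdF hk hk₀.1 hkI hk₀I s).symm
    have hBb : ∀ k ∈ V, B l₀ ≤ B k :=
      fun k hk => swap_sum_le V J G hmG hdG hk hl₀.1 hl₀J s
    have hBeq : ∀ k ∈ V, k ∉ J → B k = B l₀ :=
      fun k hk hkJ => (swap_sum_eq V J G hdG hk hl₀.1 hkJ hl₀J s).symm
    have hIH : ∀ k ∈ V, (((V.card - 1).choose s : ℕ) : ℝ) * C k ≤ A k * B k := by
      intro k hk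
      have hdisj : Disjoint (I.erase k) (J.erase k) :=
        Finset.disjoint_of_subset_left (erase_subset _ _)
          (Finset.disjoint_of_subset_right (erase_subset _ _) hIJ)
      have hmF' : Monotone (fun S => F (insert k S)) :=
        fun S T hST => hmF (insert_subset_insert _ hST)
      have hmG' : Monotone (fun S => G (insert k S)) :=
        fun S T hST => hmG (insert_subset_insert _ hST)
      have hdF' : ∀ S, F (insert k S) = F (insert k (S ∩ I.erase k)) := by
        intro S
        rw [hdF (insert k S), hdF (insert k (S ∩ I.erase k))]
        congr 1
        ext x
        simp only [mem_inter, mem_insert, mem_erase]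
        tauto
      have hdG' : ∀ S, G (insert k S) = G (insert k (S ∩ J.erase k)) := by
        intro S
        rw [hdG (insert k S), hdG (insert k (S ∩ J.erase k))]
        congr 1
        ext x
        simp only [mem_inter, mem_insert, mem_erase]
        tauto
      have := ih (V.erase k) (I.erase k) (J.erase k) hdisj
        (fun S => F (insert k S)) (fun S => G (insert k S)) hmF' hmG' hdF' hdG'
      rwa [card_erase_of_mem hk] at this
    have huv : ∀ k ∈ V, (A k - A k₀) * (B k - B l₀) = 0 := by
      intro k hk
      by_cases hkI : k ∈ I
      · have hkJ : k ∉ J := Finset.disjoint_left.mp hIJ hkI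
        rw [hBeq k hk hkJ, sub_self, mul_zero]
      · rw [hAeq k hk hkI, sub_self, zero_mul]
    have hcov : (V.card : ℝ) * ∑ k ∈ V, A k * B k ≤ (∑ k ∈ V, A k) * ∑ k ∈ V, B k :=
      cov_step V A B (A k₀) (B l₀) hAa hBb huv
    have hCsum : ∑ k ∈ V, C k = (s + 1 : ℝ) * ∑ S ∈ V.powersetCard (s+1), F S * G S :=
      count_id V s (fun S => F S * G S)
    have hAsum : ∑ k ∈ V, A k = (s + 1 : ℝ) * ∑ S ∈ V.powersetCard (s+1), F S :=
      count_id V s F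
    have hBsum : ∑ k ∈ V, B k = (s + 1 : ℝ) * ∑ S ∈ V.powersetCard (s+1), G S :=
      count_id V s G
    have h1 : 1 ≤ V.card := le_trans (Nat.succ_le_succ (Nat.zero_le s)) hN
    have h2 : V.card * ((V.card - 1).choose s) = (V.card.choose (s+1)) * (s+1) := by
      obtain ⟨m, hm⟩ : ∃ m, V.card = m + 1 := ⟨V.card - 1, by omega⟩
      rw [hm, Nat.add_sub_cancel]
      simpa using Nat.add_one_mul_choose_eq m s
    have hchoose : (V.card : ℝ) * (((V.card - 1).choose s : ℕ) : ℝ)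
        = (((V.card.choose (s+1) : ℕ)) : ℝ) * ((s:ℝ) + 1) := by
      exact_mod_cast congrArg (fun x : ℕ => (x : ℝ)) h2
    have t1 : (((V.card - 1).choose s : ℕ) : ℝ) * ∑ k ∈ V, C k ≤ ∑ k ∈ V, A k * B k := by
      rw [mul_sum]
      exact sum_le_sum hIH
    have main : ((s:ℝ) + 1)^2 * (((V.card.choose (s+1) : ℕ) : ℝ) *
          ∑ S ∈ V.powersetCard (s+1), F S * G S)
        ≤ ((s:ℝ) + 1)^2 * ((∑ S ∈ V.powersetCard (s+1), F S) *
          ∑ S ∈ V.powersetCard (s+1), G S) := by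
      calc ((s:ℝ) + 1)^2 * (((V.card.choose (s+1) : ℕ) : ℝ) *
            ∑ S ∈ V.powersetCard (s+1), F S * G S)
          = (V.card : ℝ) * ((((V.card - 1).choose s : ℕ) : ℝ) * ∑ k ∈ V, C k) := by
            rw [hCsum]
            linear_combination (-((s:ℝ) + 1)) *
              (∑ S ∈ V.powersetCard (s+1), F S * G S) * hchoose
        _ ≤ (V.card : ℝ) * ∑ k ∈ V, A k * B k :=
            mul_le_mul_of_nonneg_left t1 (Nat.cast_nonneg _)
        _ ≤ (∑ k ∈ V, A k) * ∑ k ∈ V, B k := hcov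
        _ = ((s:ℝ) + 1)^2 * ((∑ S ∈ V.powersetCard (s+1), F S) *
            ∑ S ∈ V.powersetCard (s+1), G S) := by
            rw [hAsum, hBsum]; ring
    have hpos : (0:ℝ) < ((s:ℝ) + 1)^2 := by positivity
    exact le_of_mul_le_mul_left main hpos

end NAUniformSubset

end NAAux

/-- Random variables `X 1, …, X n` on a common probability space are *negatively associated*
if for all disjoint subsets `I, J ⊆ [n]` and all coordinatewise non-decreasing functions
`f : ℝ^I → ℝ` and `g : ℝ^J → ℝ`,
`E[f(X i, i ∈ I) · g(X j, j ∈ J)] ≤ E[f(X i, i ∈ I)] · E[g(X j, j ∈ J)]`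
(whenever these expectations exist). -/
def NegativelyAssociated {Ω : Type*} [MeasurableSpace Ω] (μ : Measure Ω) {n : ℕ}
    (X : Fin n → Ω → ℝ) : Prop :=
  ∀ (I J : Finset (Fin n)), Disjoint I J →
    ∀ (f : (I → ℝ) → ℝ) (g : (J → ℝ) → ℝ), Monotone f → Monotone g →
      Integrable (fun ω => f (fun i => X i ω)) μ →
      Integrable (fun ω => g (fun j => X j ω)) μ →
      Integrable (fun ω => f (fun i => X i ω) * g (fun j => X j ω)) μ →
      ∫ ω, f (fun i => X i ω) * g (fun j => X j ω) ∂μ ≤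
        (∫ ω, f (fun i => X i ω) ∂μ) * ∫ ω, g (fun j => X j ω) ∂μ

/-- The sample space of `s`-element subsets of `[n] = Fin n`. -/
abbrev SubsetsOfCard (n s : ℕ) : Type := {A : Finset (Fin n) // A.card = s}

instance (n s : ℕ) : MeasurableSpace (SubsetsOfCard n s) := ⊤

/-- The uniform probability measure on the `s`-element subsets of `[n]`. -/
noncomputable def uniformSubsetMeasure (n s : ℕ) : Measure (SubsetsOfCard n s) :=
  (Fintype.card (SubsetsOfCard n s) : ENNReal)⁻¹ • Measure.count

namespace NAUniformSubset

instance (n s : ℕ) : MeasurableSingletonClass (SubsetsOfCard n s) :=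
  ⟨fun _ => MeasurableSpace.measurableSet_top⟩

lemma card_subsetsOfCard (n s : ℕ) : Fintype.card (SubsetsOfCard n s) = n.choose s := by
  rw [Fintype.card_finset_len, Fintype.card_fin]

lemma integral_uniformSubsetMeasure (n s : ℕ) (h : SubsetsOfCard n s → ℝ) :
    ∫ ω, h ω ∂(uniformSubsetMeasure n s)
      = ((n.choose s : ℕ) : ℝ)⁻¹ * ∑ A : SubsetsOfCard n s, h A := by
  rw [uniformSubsetMeasure, MeasureTheory.integral_smul_measure,
    MeasureTheory.integral_fintype (MeasureTheory.Integrable.of_finite)]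
  simp [MeasureTheory.measureReal_def, MeasureTheory.Measure.count_singleton, card_subsetsOfCard, ENNReal.toReal_inv]

lemma sum_subsetsOfCard (n s : ℕ) (H : Finset (Fin n) → ℝ) :
    ∑ A : SubsetsOfCard n s, H A.1
      = ∑ S ∈ (Finset.univ : Finset (Fin n)).powersetCard s, H S :=
  (Finset.sum_subtype _ (fun _ => Finset.mem_powersetCard_univ) H).symm

end NAUniformSubset

/-- If `S` is a uniformly random `s`-element subset of `[n]` (with `0 ≤ s ≤ n`), then the
indicator random variables `X i = 1{i ∈ S}`, for `i ∈ [n]`, are negatively associated. -/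
theorem negativelyAssociated_uniform_subset_indicators (n s : ℕ) (hs : s ≤ n) :
    NegativelyAssociated (uniformSubsetMeasure n s)
      (fun (i : Fin n) (S : SubsetsOfCard n s) => if i ∈ S.1 then (1 : ℝ) else 0) := by
  intro I J hIJ f g hf hg _ _ _
  classical
  set F : Finset (Fin n) → ℝ :=
    fun S => f (fun i => if (i : Fin n) ∈ S then (1:ℝ) else 0) with hF_def
  set G : Finset (Fin n) → ℝ :=
    fun S => g (fun j => if (j : Fin n) ∈ S then (1:ℝ) else 0) with hG_def
  have hmF : Monotone F := by
    intro S T hST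
    apply hf
    intro i
    by_cases h : (i : Fin n) ∈ S
    · simp [h, hST h]
    · simp only [if_neg h]
      split <;> norm_num
  have hmG : Monotone G := by
    intro S T hST
    apply hg
    intro j
    by_cases h : (j : Fin n) ∈ S
    · simp [h, hST h]
    · simp only [if_neg h]
      split <;> norm_num
  have hdF : ∀ S, F S = F (S ∩ I) := by
    intro S
    apply congrArg f
    funext i
    simp [Finset.mem_inter, i.2]
  have hdG : ∀ S, G S = G (S ∩ J) := by
    intro S
    apply congrArg g
    funext j
    simp [Finset.mem_inter, j.2]
  have hkey := NAUniformSubset.key_na s (Finset.univ : Finset (Fin n)) I J hIJ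
    F G hmF hmG hdF hdG
  rw [Finset.card_univ, Fintype.card_fin] at hkey
  rw [← NAUniformSubset.sum_subsetsOfCard n s F,
    ← NAUniformSubset.sum_subsetsOfCard n s G,
    ← NAUniformSubset.sum_subsetsOfCard n s (fun S => F S * G S)] at hkey
  have e1 : ∫ ω, f (fun i => if (i : Fin n) ∈ ω.1 then (1:ℝ) else 0) *
        g (fun j => if (j : Fin n) ∈ ω.1 then (1:ℝ) else 0) ∂(uniformSubsetMeasure n s)
      = ((n.choose s : ℕ) : ℝ)⁻¹ * ∑ A : SubsetsOfCard n s, F A.1 * G A.1 :=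
    NAUniformSubset.integral_uniformSubsetMeasure n s _
  have e2 : ∫ ω, f (fun i => if (i : Fin n) ∈ ω.1 then (1:ℝ) else 0)
        ∂(uniformSubsetMeasure n s)
      = ((n.choose s : ℕ) : ℝ)⁻¹ * ∑ A : SubsetsOfCard n s, F A.1 :=
    NAUniformSubset.integral_uniformSubsetMeasure n s _
  have e3 : ∫ ω, g (fun j => if (j : Fin n) ∈ ω.1 then (1:ℝ) else 0)
        ∂(uniformSubsetMeasure n s)
      = ((n.choose s : ℕ) : ℝ)⁻¹ * ∑ A : SubsetsOfCard n s, G A.1 :=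
    NAUniformSubset.integral_uniformSubsetMeasure n s _
  show ∫ ω, f (fun i => if (i : Fin n) ∈ ω.1 then (1:ℝ) else 0) *
        g (fun j => if (j : Fin n) ∈ ω.1 then (1:ℝ) else 0) ∂(uniformSubsetMeasure n s) ≤ _
  rw [e1, e2, e3]
  have hc : (0:ℝ) < ((n.choose s : ℕ) : ℝ) := by
    exact_mod_cast Nat.choose_pos hs
  set c : ℝ := ((n.choose s : ℕ) : ℝ)
  have hcne : c ≠ 0 := ne_of_gt hc
  rw [show (c⁻¹ * ∑ A : SubsetsOfCard n s, F A.1) * (c⁻¹ * ∑ A : SubsetsOfCard n s, G A.1)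
      = (c⁻¹ * c⁻¹) * ((∑ A : SubsetsOfCard n s, F A.1) * ∑ A : SubsetsOfCard n s, G A.1)
    from by ring]
  have : c⁻¹ * ∑ A : SubsetsOfCard n s, F A.1 * G A.1
      = (c⁻¹ * c⁻¹) * (c * ∑ A : SubsetsOfCard n s, F A.1 * G A.1) := by
    field_simp
  rw [this]
  exact mul_le_mul_of_nonneg_left hkey (by positivity)
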